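/- Let f_1, ..., f_m : K → ℝ be quasi-convex C^1 functions on an open convex set K ⊆ ℝ^d. Then the set Cent_1 := {x ∈ K : cone({∇f_1(x), ..., ∇f_m(x)}) = ℝ^d} is open in K. -/

import Mathlib

open scoped RealInnerProductSpace

/-- The conic hull of a set `S`: all finite nonnegative linear combinations
of elements of `S`. -/
def coneS {d : ℕ} (S : Set (EuclideanSpace ℝ (Fin d))) : Set (EuclideanSpace ℝ (Fin d)) :=
  {y | ∃ (k : ℕ) (c : Fin k → ℝ) (u : Fin k → EuclideanSpace ℝ (Fin d)),
    (∀ i, 0 ≤ c i) ∧ (∀ i, u i ∈ S) ∧ y = ∑ i, c i • u i}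

lemma coneS_zero_mem {d : ℕ} (S : Set (EuclideanSpace ℝ (Fin d))) :
    (0 : EuclideanSpace ℝ (Fin d)) ∈ coneS S :=
  ⟨0, Fin.elim0, Fin.elim0, fun i => i.elim0, fun i => i.elim0, by simp⟩

lemma coneS_subset {d : ℕ} (S : Set (EuclideanSpace ℝ (Fin d))) : S ⊆ coneS S := by
  intro s hs
  exact ⟨1, fun _ => 1, fun _ => s, fun _ => zero_le_one, fun _ => hs, by simp⟩

lemma coneS_smul_mem {d : ℕ} {S : Set (EuclideanSpace ℝ (Fin d))} {c : ℝ} (hc : 0 ≤ c)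
    {x : EuclideanSpace ℝ (Fin d)} (hx : x ∈ coneS S) : c • x ∈ coneS S := by
  obtain ⟨k, c', u, hc', hu, rfl⟩ := hx
  refine ⟨k, fun i => c * c' i, u, fun i => mul_nonneg hc (hc' i), hu, ?_⟩
  rw [Finset.smul_sum]
  simp [smul_smul]

lemma coneS_add_mem {d : ℕ} {S : Set (EuclideanSpace ℝ (Fin d))}
    {x y : EuclideanSpace ℝ (Fin d)} (hx : x ∈ coneS S) (hy : y ∈ coneS S) :
    x + y ∈ coneS S := by
  obtain ⟨k₁, c₁, u₁, hc₁, hu₁, rfl⟩ := hx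
  obtain ⟨k₂, c₂, u₂, hc₂, hu₂, rfl⟩ := hy
  refine ⟨k₁ + k₂, Fin.addCases c₁ c₂, Fin.addCases u₁ u₂, ?_, ?_, ?_⟩
  · intro i
    refine Fin.addCases (fun j => ?_) (fun j => ?_) i
    · simpa using hc₁ j
    · simpa using hc₂ j
  · intro i
    refine Fin.addCases (fun j => ?_) (fun j => ?_) i
    · simpa using hu₁ j
    · simpa using hu₂ j
  · rw [Fin.sum_univ_add]
    simp

lemma coneS_convex {d : ℕ} (S : Set (EuclideanSpace ℝ (Fin d))) : Convex ℝ (coneS S) :=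
  fun _ hx _ hy _ _ ha hb _ => coneS_add_mem (coneS_smul_mem ha hx) (coneS_smul_mem hb hy)

lemma coneS_eq_univ_iff {d m : ℕ} (g : Fin m → EuclideanSpace ℝ (Fin d)) :
    coneS (Set.range g) = Set.univ ↔
      ∀ u : EuclideanSpace ℝ (Fin d), u ≠ 0 → ∃ i, 0 < ⟪g i, u⟫ := by
  constructor
  · intro h u hu
    have hmem : u ∈ coneS (Set.range g) := h ▸ Set.mem_univ u
    obtain ⟨k, c, v, hc, hv, huv⟩ := hmem
    have h1 : (0 : ℝ) < ⟪u, u⟫ :=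
      lt_of_le_of_ne real_inner_self_nonneg (Ne.symm (inner_self_ne_zero.2 hu))
    have h2 : ⟪u, u⟫ = ∑ i, c i * ⟪v i, u⟫ := by
      nth_rewrite 1 [huv]
      rw [sum_inner]
      exact Finset.sum_congr rfl fun i _ => real_inner_smul_left _ _ _
    have h3 : ∃ i, 0 < c i * ⟪v i, u⟫ := by
      by_contra hcon
      push_neg at hcon
      have : ∑ i, c i * ⟪v i, u⟫ ≤ 0 := Finset.sum_nonpos fun i _ => hcon i
      linarith [h2 ▸ h1]
    obtain ⟨i, hi⟩ := h3
    have h4 : 0 < ⟪v i, u⟫ := by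
      by_contra h'
      push_neg at h'
      have := mul_nonpos_of_nonneg_of_nonpos (hc i) h'
      linarith
    obtain ⟨j, hj⟩ := hv i
    exact ⟨j, by rwa [hj]⟩
  · intro h
    -- the linear span is everything
    have hspan : Submodule.span ℝ (Set.range g) = ⊤ := by
      by_contra hspan
      have hbot : (Submodule.span ℝ (Set.range g))ᗮ ≠ ⊥ := by
        rwa [Ne, Submodule.orthogonal_eq_bot_iff]
      obtain ⟨u, huo, hu0⟩ := Submodule.exists_mem_ne_zero_of_ne_bot hbot
      obtain ⟨i, hi⟩ := h u hu0
      have : ⟪g i, u⟫ = 0 :=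
        (Submodule.mem_orthogonal _ _).1 huo (g i) (Submodule.subset_span ⟨i, rfl⟩)
      linarith
    set C : Set (EuclideanSpace ℝ (Fin d)) :=
      convexHull ℝ (insert 0 (Set.range g)) with hC
    have hCconv : Convex ℝ C := convex_convexHull ℝ _
    -- interior of C is nonempty
    have hCint : (interior C).Nonempty := by
      rw [hCconv.interior_nonempty_iff_affineSpan_eq_top]
      rw [affineSpan_convexHull]
      have : (affineSpan ℝ (insert 0 (Set.range g)) : Set (EuclideanSpace ℝ (Fin d)))
          = (Submodule.span ℝ (Set.range g) : Set (EuclideanSpace ℝ (Fin d))) :=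
        affineSpan_insert_zero _
      apply AffineSubspace.coe_injective
      rw [AffineSubspace.top_coe, this, hspan]
      exact Submodule.top_coe
    -- 0 is in the interior of C
    have h0 : (0 : EuclideanSpace ℝ (Fin d)) ∈ interior C := by
      by_contra h0
      obtain ⟨φ, hφ⟩ :=
        geometric_hahn_banach_open_point hCconv.interior isOpen_interior h0
      obtain ⟨a₀, ha₀⟩ := hCint
      have hφ0 : ∀ a ∈ interior C, φ a < 0 := by
        intro a ha
        have := hφ a ha
        simpa using this
      -- φ ≤ 0 on all of C by a limiting argument
      have hCle : ∀ x ∈ C, φ x ≤ 0 := by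
        intro x hx
        have key : ∀ t : ℝ, t ∈ Set.Ioo (0:ℝ) 1 →
            φ ((1 - t) • x + t • a₀) < 0 := by
          intro t ht
          refine hφ0 _ ?_
          exact hCconv.combo_closure_interior_mem_interior (subset_closure hx) ha₀
            (by linarith [ht.2]) ht.1 (by ring)
        have hcont : Continuous fun t : ℝ => φ ((1 - t) • x + t • a₀) := by
          fun_prop
        have hlim : Filter.Tendsto (fun t : ℝ => φ ((1 - t) • x + t • a₀))
            (nhdsWithin 0 (Set.Ioi 0)) (nhds (φ x)) := by
          have h1 := hcont.tendsto 0
          simp only [sub_zero, one_smul, zero_smul, add_zero] at h1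
          exact h1.mono_left nhdsWithin_le_nhds
        refine le_of_tendsto hlim ?_
        filter_upwards [Ioo_mem_nhdsGT_of_mem
          (Set.mem_Ico.2 ⟨le_refl (0:ℝ), one_pos⟩)] with t ht
        exact (key t ht).le
      set u : EuclideanSpace ℝ (Fin d) :=
        (InnerProductSpace.toDual ℝ (EuclideanSpace ℝ (Fin d))).symm φ with hu
      have huφ : ∀ y, ⟪u, y⟫ = φ y := fun y =>
        InnerProductSpace.toDual_symm_apply
      have hu0 : u ≠ 0 := by
        intro hcon
        have h1 : φ a₀ < 0 := hφ0 a₀ ha₀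
        have h2 : ⟪u, a₀⟫ = φ a₀ := huφ a₀
        rw [hcon, inner_zero_left] at h2
        linarith
      obtain ⟨i, hi⟩ := h u hu0
      have hgi : g i ∈ C := subset_convexHull ℝ _ (Set.mem_insert_of_mem _ ⟨i, rfl⟩)
      have : φ (g i) ≤ 0 := hCle _ hgi
      rw [← huφ (g i), real_inner_comm] at this
      linarith
    -- conclude
    have hCcone : C ⊆ coneS (Set.range g) := by
      refine convexHull_min ?_ (coneS_convex _)
      rintro y (rfl | hy)
      · exact coneS_zero_mem _
      · exact coneS_subset _ hy
    apply Set.eq_univ_of_forall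
    intro y
    rcases eq_or_ne y 0 with rfl | hy0
    · exact coneS_zero_mem _
    · obtain ⟨r, hr, hball⟩ := Metric.mem_nhds_iff.1 (mem_interior_iff_mem_nhds.1 h0)
      have hy : 0 < ‖y‖ := norm_pos_iff.2 hy0
      set z : EuclideanSpace ℝ (Fin d) := (r / (2 * ‖y‖)) • y with hz
      have hzball : z ∈ Metric.ball (0 : EuclideanSpace ℝ (Fin d)) r := by
        rw [mem_ball_zero_iff, hz, norm_smul, Real.norm_eq_abs,
          abs_of_pos (show (0:ℝ) < r / (2 * ‖y‖) by positivity)]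
        rw [div_mul_eq_mul_div, mul_comm]
        rw [div_lt_iff₀ (by positivity)]
        nlinarith
      have hzcone : z ∈ coneS (Set.range g) := hCcone (hball hzball)
      have : ((2 * ‖y‖) / r) • z ∈ coneS (Set.range g) :=
        coneS_smul_mem (by positivity) hzcone
      rwa [hz, smul_smul, div_mul_div_comm, mul_comm (2 * ‖y‖) r,
        div_self (by positivity), one_smul] at this


lemma gradient_continuousAt_of_contDiffOn {E : Type*} [NormedAddCommGroup E]
    [InnerProductSpace ℝ E] [CompleteSpace E] {f : E → ℝ} {K : Set E}
    (hKo : IsOpen K) (hf : ContDiffOn ℝ 1 f K) {x : E} (hx : x ∈ K) :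
    ContinuousAt (gradient f) x := by
  have h1 : ContinuousOn (fderiv ℝ f) K :=
    hf.continuousOn_fderiv_of_isOpen hKo le_rfl
  have h2 : ContinuousAt (fderiv ℝ f) x := h1.continuousAt (hKo.mem_nhds hx)
  exact ((InnerProductSpace.toDual ℝ E).symm.continuous.continuousAt).comp h2

lemma ContinuousAt.eventually_norm_sub_lt' {X E : Type*} [TopologicalSpace X]
    [NormedAddCommGroup E] {h : X → E} {x₀ : X} (hc : ContinuousAt h x₀)
    {ε : ℝ} (hε : 0 < ε) : ∀ᶠ x in nhds x₀, ‖h x - h x₀‖ < ε := by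
  have h1 := Metric.tendsto_nhds.mp hc ε hε
  filter_upwards [h1] with x hx
  rwa [dist_eq_norm] at hx

/-- The type-1 central region `Cent₁ = {x ∈ K : cone({∇fᵢ(x)}) = ℝ^d}` of a family of
quasi-convex `C¹` functions on an open convex set is open. -/
theorem stmt16 {d m : ℕ} (K : Set (EuclideanSpace ℝ (Fin d)))
    (hKo : IsOpen K) (hKc : Convex ℝ K)
    (f : Fin m → EuclideanSpace ℝ (Fin d) → ℝ)
    (hf : ∀ i, ContDiffOn ℝ 1 (f i) K)
    (hq : ∀ i (ℓ : ℝ), Convex ℝ {x ∈ K | f i x < ℓ}) :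
    IsOpen {x ∈ K | coneS (Set.range fun i => gradient (f i) x) = Set.univ} := by
  rw [isOpen_iff_mem_nhds]
  rintro x₀ ⟨hx₀K, hx₀⟩
  rcases Nat.eq_zero_or_pos d with hd | hd
  · -- trivial case d = 0
    subst hd
    have hall : ∀ x : EuclideanSpace ℝ (Fin 0),
        coneS (Set.range fun i => gradient (f i) x) = Set.univ := by
      intro x
      apply Set.eq_univ_of_forall
      intro y
      have : y = 0 := Subsingleton.elim y 0
      rw [this]
      exact coneS_zero_mem _
    filter_upwards [hKo.mem_nhds hx₀K] with x hx
    exact ⟨hx, hall x⟩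
  · -- d ≥ 1
    rw [coneS_eq_univ_iff (fun i => gradient (f i) x₀)] at hx₀
    -- a nonzero vector exists
    have hvne : ∃ v : EuclideanSpace ℝ (Fin d), v ≠ 0 := by
      refine ⟨EuclideanSpace.single ⟨0, hd⟩ 1, fun hcon => ?_⟩
      have := congrArg (fun w : EuclideanSpace ℝ (Fin d) => w ⟨0, hd⟩) hcon
      simp [EuclideanSpace.single_apply] at this
    obtain ⟨v₀, hv₀⟩ := hvne
    obtain ⟨i₀, _⟩ := hx₀ v₀ hv₀
    haveI : Nonempty (Fin m) := ⟨i₀⟩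
    set G : Fin m → EuclideanSpace ℝ (Fin d) := fun i => gradient (f i) x₀ with hG
    set F : EuclideanSpace ℝ (Fin d) → ℝ :=
      fun u => Finset.univ.sup' Finset.univ_nonempty (fun i => ⟪G i, u⟫) with hF
    -- the unit sphere
    set S : Set (EuclideanSpace ℝ (Fin d)) := Metric.sphere 0 1 with hS
    have hScomp : IsCompact S := isCompact_sphere 0 1
    have hSne : S.Nonempty := by
      refine ⟨‖v₀‖⁻¹ • v₀, ?_⟩
      rw [hS, mem_sphere_zero_iff_norm, norm_smul, norm_inv, norm_norm,
        inv_mul_cancel₀ (norm_ne_zero_iff.2 hv₀)]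
    have hFcont : ContinuousOn F S := by
      apply ContinuousOn.finset_sup'_apply
      intro i _
      exact (Continuous.inner continuous_const continuous_id).continuousOn
    obtain ⟨u₀, hu₀S, hu₀min'⟩ := hScomp.exists_isMinOn hSne hFcont
    have hu₀min : ∀ y ∈ S, F u₀ ≤ F y := fun y hy => hu₀min' hy
    set ε : ℝ := F u₀ with hε
    have hεpos : 0 < ε := by
      have hu₀0 : u₀ ≠ 0 := by
        intro hcon
        rw [hS] at hu₀S
        rw [hcon] at hu₀S
        simp at hu₀S
      obtain ⟨i, hi⟩ := hx₀ u₀ hu₀0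
      calc (0 : ℝ) < ⟪G i, u₀⟫ := hi
        _ ≤ ε := Finset.le_sup' (fun j => ⟪G j, u₀⟫) (Finset.mem_univ i)
    -- continuity of the gradients at x₀
    have hcont : ∀ i, ContinuousAt (fun x => gradient (f i) x) x₀ := fun i =>
      gradient_continuousAt_of_contDiffOn hKo (hf i) hx₀K
    have hev : ∀ᶠ x in nhds x₀, ∀ i, ‖gradient (f i) x - G i‖ < ε := by
      rw [Filter.eventually_all]
      exact fun i => ContinuousAt.eventually_norm_sub_lt' (hcont i) hεpos
    filter_upwards [hev, hKo.mem_nhds hx₀K] with x hx hxK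
    refine ⟨hxK, (coneS_eq_univ_iff _).2 ?_⟩
    intro u hu
    have hunorm : 0 < ‖u‖ := norm_pos_iff.2 hu
    set v : EuclideanSpace ℝ (Fin d) := ‖u‖⁻¹ • u with hv
    have hvS : v ∈ S := by
      rw [hS, mem_sphere_zero_iff_norm, hv, norm_smul, norm_inv, norm_norm,
        inv_mul_cancel₀ (norm_ne_zero_iff.2 hu)]
    have hFv : ε ≤ F v := hu₀min v hvS
    obtain ⟨i, _, hie⟩ := Finset.exists_mem_eq_sup' Finset.univ_nonempty (fun i => ⟪G i, v⟫)
    have h1 : ε ≤ ⟪G i, v⟫ := le_trans hFv (le_of_eq hie)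
    have h2 : |⟪gradient (f i) x - G i, v⟫| ≤ ‖gradient (f i) x - G i‖ * ‖v‖ :=
      abs_real_inner_le_norm _ _
    have hvnorm : ‖v‖ = 1 := mem_sphere_zero_iff_norm.1 hvS
    rw [hvnorm, mul_one] at h2
    have h3 : 0 < ⟪gradient (f i) x, v⟫ := by
      have heq : ⟪gradient (f i) x - G i, v⟫
          = ⟪gradient (f i) x, v⟫ - ⟪G i, v⟫ := inner_sub_left _ _ _
      have habs := abs_le.1 h2
      have hxi := hx i
      linarith [habs.1]
    refine ⟨i, ?_⟩
    have h4 : ⟪gradient (f i) x, v⟫ = ‖u‖⁻¹ * ⟪gradient (f i) x, u⟫ :=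
      real_inner_smul_right _ _ _
    have h5 : 0 < ‖u‖⁻¹ := by positivity
    nlinarith [h4 ▸ h3]
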